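/- (Linear common-descent bound.) Under the setting of the common descent certificate—f_1, …, f_N : ℝ^d → ℝ L-smooth with ‖∇f_i‖ ≤ G_f, weights ρ_i > 0 summing to 1 with ρ_min = min_i ρ_i, F = Σ ρ_i f_i, η_l > 0, K_i ≥ 1 with K_max = max_i K_i, nonzero accumulated client updates g_i at a point θ, and g ∈ ℝ^d with ⟨g_i/‖g_i‖, g⟩ = ρ_i for all i and ‖g‖ ≤ G—one has the linear bound ⟨∇F(θ), g⟩ ≥ ρ_min ‖∇F(θ)‖ − B_drift · η_l (K_max − 1), where B_drift = (L G_f/2)(G + Σ_{i=1}^N ρ_i²). -/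

import Mathlib

open scoped InnerProductSpace BigOperators

/-- Local gradient-descent trajectory. -/
noncomputable def traj {E : Type*} [NormedAddCommGroup E] [InnerProductSpace ℝ E]
    [CompleteSpace E] (f : E → ℝ) (ηl : ℝ) (θ : E) : ℕ → E
  | 0 => θ
  | k + 1 => traj f ηl θ k - ηl • gradient f (traj f ηl θ k)

lemma traj_dist {E : Type*} [NormedAddCommGroup E] [InnerProductSpace ℝ E]
    [CompleteSpace E] (f : E → ℝ) (ηl Gf : ℝ) (θ : E) (hηl : 0 ≤ ηl)
    (hGf : ∀ x, ‖gradient f x‖ ≤ Gf) (k : ℕ) :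
    ‖traj f ηl θ k - θ‖ ≤ ηl * Gf * k := by
  induction k with
  | zero => simp [traj]
  | succ k ih =>
    have : traj f ηl θ (k+1) - θ = (traj f ηl θ k - θ) - ηl • gradient f (traj f ηl θ k) := by
      simp [traj]; abel
    rw [this]
    have h1 : ‖(traj f ηl θ k - θ) - ηl • gradient f (traj f ηl θ k)‖
        ≤ ‖traj f ηl θ k - θ‖ + ‖ηl • gradient f (traj f ηl θ k)‖ := norm_sub_le _ _
    have h2 : ‖ηl • gradient f (traj f ηl θ k)‖ ≤ ηl * Gf := by
      rw [norm_smul, Real.norm_eq_abs, abs_of_nonneg hηl]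
      exact mul_le_mul_of_nonneg_left (hGf _) hηl
    push_cast
    nlinarith [ih]

set_option maxHeartbeats 1000000 in
/-- **Linear common-descent bound.** If the aggregate `g` satisfies the exact alignment
constraints `⟪gᵢ/‖gᵢ‖, g⟫ = ρᵢ` with the accumulated client updates `gᵢ`, and `‖g‖ ≤ G`,
then `⟪∇F(θ), g⟫ ≥ ρ_min‖∇F(θ)‖ − B_drift ηl (K_max − 1)`, where
`B_drift = (L G_f/2)(G + Σ ρᵢ²)`. -/
theorem linear_common_descent_bound {d N : ℕ} (hd : 1 ≤ d) (hN : 1 ≤ N)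
    (f : Fin N → EuclideanSpace ℝ (Fin d) → ℝ) (L Gf : ℝ)
    (hdiff : ∀ i, Differentiable ℝ (f i))
    (hLip : ∀ i x y, ‖gradient (f i) x - gradient (f i) y‖ ≤ L * ‖x - y‖)
    (hGf : ∀ i x, ‖gradient (f i) x‖ ≤ Gf)
    (ρ : Fin N → ℝ) (hρpos : ∀ i, 0 < ρ i) (hρsum : ∑ i, ρ i = 1)
    (F : EuclideanSpace ℝ (Fin d) → ℝ) (hF : F = fun x => ∑ i, ρ i * f i x)
    (ρmin : ℝ) (hρminlb : ∀ i, ρmin ≤ ρ i) (hρminmem : ∃ i, ρ i = ρmin)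
    (ηl : ℝ) (hηl : 0 < ηl)
    (K : Fin N → ℕ) (hK : ∀ i, 1 ≤ K i)
    (Kmax : ℕ) (hKmaxub : ∀ i, K i ≤ Kmax) (hKmaxmem : ∃ i, K i = Kmax)
    (θ : EuclideanSpace ℝ (Fin d))
    (gI : Fin N → EuclideanSpace ℝ (Fin d))
    (hgI : ∀ i, gI i = ηl • ∑ k ∈ Finset.range (K i),
        gradient (f i) (traj (f i) ηl θ k))
    (hne : ∀ i, gI i ≠ 0)
    (g : EuclideanSpace ℝ (Fin d))
    (halign : ∀ i, ⟪‖gI i‖⁻¹ • gI i, g⟫_ℝ = ρ i)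
    (G : ℝ) (hG : ‖g‖ ≤ G)
    (Bdrift : ℝ) (hB : Bdrift = L * Gf / 2 * (G + ∑ i, (ρ i) ^ 2)) :
    ρmin * ‖gradient F θ‖ - Bdrift * (ηl * ((Kmax : ℝ) - 1)) ≤ ⟪gradient F θ, g⟫_ℝ := by
  classical
  have i0 : Fin N := ⟨0, hN⟩
  -- basic nonnegativity facts
  have hGf0 : 0 ≤ Gf := le_trans (norm_nonneg _) (hGf i0 θ)
  have hG0 : 0 ≤ G := le_trans (norm_nonneg _) hG
  have hL0 : 0 ≤ L := by
    have hx : ‖(EuclideanSpace.single (⟨0, hd⟩ : Fin d) (1:ℝ)) - 0‖ = 1 := by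
      simp [EuclideanSpace.norm_single]
    have := hLip i0 (EuclideanSpace.single (⟨0, hd⟩ : Fin d) (1:ℝ)) 0
    rw [hx, mul_one] at this
    exact le_trans (norm_nonneg _) this
  obtain ⟨im, him⟩ := hρminmem
  have hρmin0 : 0 < ρmin := him ▸ hρpos im
  obtain ⟨ik, hik⟩ := hKmaxmem
  have hKmax1 : 1 ≤ Kmax := hik ▸ hK ik
  have hKmaxR : (1:ℝ) ≤ (Kmax:ℝ) := by exact_mod_cast hKmax1
  set D : ℝ := L * ηl * Gf * ((Kmax:ℝ) - 1) / 2 with hD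
  have hD0 : 0 ≤ D := by
    apply div_nonneg _ (by norm_num)
    apply mul_nonneg (mul_nonneg (mul_nonneg hL0 hηl.le) hGf0) (by linarith)
  set v : Fin N → EuclideanSpace ℝ (Fin d) := fun i => gradient (f i) θ with hv
  set S : Fin N → EuclideanSpace ℝ (Fin d) := fun i =>
    ∑ k ∈ Finset.range (K i), gradient (f i) (traj (f i) ηl θ k) with hS
  -- alignment in terms of S
  have halignS : ∀ i, ⟪S i, g⟫_ℝ = ‖S i‖ * ρ i := by
    intro i
    have h1 := halign i
    rw [real_inner_smul_left] at h1
    have hn : ‖gI i‖ ≠ 0 := norm_ne_zero_iff.mpr (hne i)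
    have h2 : ⟪gI i, g⟫_ℝ = ‖gI i‖ * ρ i := by
      calc ⟪gI i, g⟫_ℝ = ‖gI i‖ * (‖gI i‖⁻¹ * ⟪gI i, g⟫_ℝ) := by
            rw [← mul_assoc, mul_inv_cancel₀ hn, one_mul]
        _ = ‖gI i‖ * ρ i := by rw [h1]
    rw [hgI i] at h2
    rw [real_inner_smul_left, norm_smul, Real.norm_eq_abs, abs_of_pos hηl] at h2
    have := mul_left_cancel₀ (ne_of_gt hηl) (by linarith [h2] : ηl * ⟪S i, g⟫_ℝ = ηl * (‖S i‖ * ρ i))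
    exact this
  -- drift bound
  have hdrift : ∀ i, ‖S i - (K i : ℝ) • v i‖ ≤ (K i : ℝ) * D := by
    intro i
    have heq : S i - (K i : ℝ) • v i
        = ∑ k ∈ Finset.range (K i), (gradient (f i) (traj (f i) ηl θ k) - v i) := by
      rw [Finset.sum_sub_distrib, Finset.sum_const, Finset.card_range]
      simp [Nat.cast_smul_eq_nsmul ℝ]; rfl
    rw [heq]
    calc ‖∑ k ∈ Finset.range (K i), (gradient (f i) (traj (f i) ηl θ k) - v i)‖
        ≤ ∑ k ∈ Finset.range (K i), ‖gradient (f i) (traj (f i) ηl θ k) - v i‖ :=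
          norm_sum_le _ _
      _ ≤ ∑ k ∈ Finset.range (K i), L * (ηl * Gf * k) := by
          apply Finset.sum_le_sum
          intro k _
          refine le_trans (hLip i _ θ) ?_
          exact mul_le_mul_of_nonneg_left (traj_dist (f i) ηl Gf θ hηl.le (hGf i) k) hL0
      _ = L * ηl * Gf * ∑ k ∈ Finset.range (K i), (k:ℝ) := by
          rw [Finset.mul_sum]; apply Finset.sum_congr rfl; intro k _; ring
      _ ≤ (K i : ℝ) * D := by
          have hsum : ∑ k ∈ Finset.range (K i), (k:ℝ) = (K i : ℝ) * ((K i : ℝ) - 1) / 2 := by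
            have h := Finset.sum_range_id_mul_two (K i)
            have h3 := congrArg (fun n : ℕ => (n:ℝ)) h
            simp only [Nat.cast_mul, Nat.cast_sum, Nat.cast_sub (hK i), Nat.cast_one,
              Nat.cast_ofNat] at h3
            linarith
          rw [hsum, hD]
          have hKle : (K i : ℝ) - 1 ≤ (Kmax : ℝ) - 1 := by
            have : (K i : ℝ) ≤ (Kmax : ℝ) := by exact_mod_cast hKmaxub i
            linarith
          have hKpos : (0:ℝ) ≤ (K i : ℝ) := Nat.cast_nonneg _
          have hLG : 0 ≤ L * ηl * Gf := mul_nonneg (mul_nonneg hL0 hηl.le) hGf0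
          have hK1 : (0:ℝ) ≤ (K i : ℝ) - 1 := by
            have : (1:ℝ) ≤ (K i : ℝ) := by exact_mod_cast hK i
            linarith
          have key : L * ηl * Gf * ((K i : ℝ) * ((K i:ℝ) - 1))
              ≤ L * ηl * Gf * ((K i : ℝ) * ((Kmax:ℝ) - 1)) := by
            apply mul_le_mul_of_nonneg_left _ hLG
            exact mul_le_mul_of_nonneg_left hKle hKpos
          linarith
  -- lower bound on ‖S i‖
  have hSlb : ∀ i, (K i : ℝ) * (‖v i‖ - D) ≤ ‖S i‖ := by
    intro i
    have h1 : ‖(K i : ℝ) • v i‖ - ‖S i - (K i : ℝ) • v i‖ ≤ ‖S i‖ := by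
      have := norm_sub_norm_le ((K i : ℝ) • v i) ((K i : ℝ) • v i - S i)
      simp only [sub_sub_cancel] at this
      rw [norm_sub_rev] at this
      linarith
    have h2 : ‖(K i : ℝ) • v i‖ = (K i : ℝ) * ‖v i‖ := by
      rw [norm_smul, Real.norm_eq_abs, abs_of_nonneg (Nat.cast_nonneg _)]
    have := hdrift i
    nlinarith [Nat.cast_nonneg (α := ℝ) (K i)]
  -- per-client inner product bound
  have hper : ∀ i, ρ i * ‖v i‖ - ρ i * D - D * G ≤ ⟪v i, g⟫_ℝ := by
    intro i
    have hKpos : (0:ℝ) < (K i : ℝ) := by exact_mod_cast Nat.lt_of_lt_of_le Nat.zero_lt_one (hK i)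
    have hsplit : (K i : ℝ) * ⟪v i, g⟫_ℝ = ⟪(K i : ℝ) • v i - S i, g⟫_ℝ + ⟪S i, g⟫_ℝ := by
      rw [← inner_add_left, sub_add_cancel, real_inner_smul_left]
    have habs : |⟪(K i : ℝ) • v i - S i, g⟫_ℝ| ≤ ((K i : ℝ) * D) * G := by
      refine le_trans (abs_real_inner_le_norm _ _) ?_
      have h1 : ‖(K i : ℝ) • v i - S i‖ ≤ (K i : ℝ) * D := by
        rw [norm_sub_rev]; exact hdrift i
      exact mul_le_mul h1 hG (norm_nonneg _) (mul_nonneg hKpos.le hD0)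
    have hSg : ((K i : ℝ) * (‖v i‖ - D)) * ρ i ≤ ⟪S i, g⟫_ℝ := by
      rw [halignS i]
      exact mul_le_mul_of_nonneg_right (hSlb i) (hρpos i).le
    have hmain : (K i : ℝ) * ⟪v i, g⟫_ℝ
        ≥ (K i : ℝ) * (ρ i * ‖v i‖ - ρ i * D - D * G) := by
      rw [hsplit]
      have := abs_le.mp habs
      nlinarith [this.1, hSg]
    exact le_of_mul_le_mul_left (by linarith [hmain]) hKpos
  -- gradient of F
  have hgradF : gradient F θ = ∑ i, ρ i • v i := by
    have hFd : HasFDerivAt F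
        (∑ i, ρ i • (InnerProductSpace.toDual ℝ (EuclideanSpace ℝ (Fin d)) (v i) : EuclideanSpace ℝ (Fin d) →L[ℝ] ℝ)) θ := by
      rw [hF]
      apply HasFDerivAt.fun_sum
      intro i _
      exact ((hasGradientAt_iff_hasFDerivAt.mp
        ((hdiff i θ).hasGradientAt)).const_mul (ρ i))
    have heq : (∑ i, ρ i • (InnerProductSpace.toDual ℝ (EuclideanSpace ℝ (Fin d)) (v i) : EuclideanSpace ℝ (Fin d) →L[ℝ] ℝ))
        = InnerProductSpace.toDual ℝ (EuclideanSpace ℝ (Fin d)) (∑ i, ρ i • v i) := by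
      rw [map_sum]
      exact Finset.sum_congr rfl fun i _ => (map_smul _ (ρ i) (v i)).symm
    rw [heq] at hFd
    exact (hasFDerivAt_iff_hasGradientAt.mp hFd).gradient.trans
      (by rw [LinearIsometryEquiv.symm_apply_apply])
  -- combine
  rw [hgradF]
  have hinner : ⟪∑ i, ρ i • v i, g⟫_ℝ = ∑ i, ρ i * ⟪v i, g⟫_ℝ := by
    rw [sum_inner]
    apply Finset.sum_congr rfl
    intro i _
    rw [real_inner_smul_left]
  rw [hinner]
  have hstep1 : ∑ i, (ρ i * (ρ i * ‖v i‖ - ρ i * D - D * G)) ≤ ∑ i, ρ i * ⟪v i, g⟫_ℝ := by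
    apply Finset.sum_le_sum
    intro i _
    exact mul_le_mul_of_nonneg_left (hper i) (hρpos i).le
  have hexp : ∑ i, (ρ i * (ρ i * ‖v i‖ - ρ i * D - D * G))
      = ∑ i, (ρ i)^2 * ‖v i‖ - D * (∑ i, (ρ i)^2) - D * G := by
    have hterm : ∀ i : Fin N, ρ i * (ρ i * ‖v i‖ - ρ i * D - D * G)
        = (ρ i)^2 * ‖v i‖ - D * (ρ i)^2 - D * G * ρ i := fun i => by ring
    rw [Finset.sum_congr rfl fun i _ => hterm i, Finset.sum_sub_distrib,
      Finset.sum_sub_distrib, ← Finset.mul_sum, ← Finset.mul_sum, hρsum, mul_one]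
  have hnormF : ρmin * ‖∑ i, ρ i • v i‖ ≤ ∑ i, (ρ i)^2 * ‖v i‖ := by
    calc ρmin * ‖∑ i, ρ i • v i‖ ≤ ρmin * ∑ i, ρ i * ‖v i‖ := by
          apply mul_le_mul_of_nonneg_left _ hρmin0.le
          refine le_trans (norm_sum_le _ _) ?_
          apply Finset.sum_le_sum
          intro i _
          rw [norm_smul, Real.norm_eq_abs, abs_of_pos (hρpos i)]
      _ = ∑ i, ρmin * (ρ i * ‖v i‖) := by rw [Finset.mul_sum]
      _ ≤ ∑ i, (ρ i)^2 * ‖v i‖ := by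
          apply Finset.sum_le_sum
          intro i _
          have : ρmin * (ρ i * ‖v i‖) ≤ ρ i * (ρ i * ‖v i‖) :=
            mul_le_mul_of_nonneg_right (hρminlb i)
              (mul_nonneg (hρpos i).le (norm_nonneg _))
          nlinarith
  have hBeq : D * (∑ i, (ρ i)^2) + D * G = Bdrift * (ηl * ((Kmax:ℝ) - 1)) := by
    rw [hB, hD]; ring
  rw [hexp] at hstep1
  linarith [hstep1, hnormF, hBeq]
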